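/- arXiv:math/0105102 — 2 statements merged into one kernel-verified Lean document; each statement's English description precedes it below -/
import Mathlib

section
/- Let R_d = ℚ[u_1,…,u_d] / (relations: (1 + u_1 + ⋯ + u_{d-1})·(1 - u_1 + u_2 - ⋯ + (-1)^{d-1}u_{d-1}) = 1 in each positive degree, and u_d = 0), graded with deg u_j = j. Then every nonzero homogeneous element of R_d has degree at most d(d-1)/2. -/
open scoped BigOperators
open MvPolynomial

/-- Grading weight: variable `i : Fin d` represents `u_{i+1}` of degree `i+1`. -/
def lagWeight (d : ℕ) : Fin d → ℕ := fun i => (i : ℕ) + 1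

/-- `F = (1 + ∑_{j=1}^{d-1} u_j)(1 + ∑_{j=1}^{d-1} (-1)^j u_j) - 1` in `ℚ[u_1,…,u_d]`. -/
noncomputable def lagF (d : ℕ) : MvPolynomial (Fin d) ℚ :=
  (1 + ∑ i : Fin d, if (i : ℕ) + 1 ≤ d - 1 then MvPolynomial.X i else 0) *
    (1 + ∑ i : Fin d, if (i : ℕ) + 1 ≤ d - 1 then
      (-1) ^ ((i : ℕ) + 1) * MvPolynomial.X i else 0) - 1

/-- The ideal generated by `u_d` and the positive-degree weighted-homogeneous
components of `F`, defining `R_d = ℚ[u_1,…,u_d]/(F = 0, u_d = 0)`. -/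
noncomputable def lagIdeal (d : ℕ) : Ideal (MvPolynomial (Fin d) ℚ) :=
  Ideal.span
    ({p | ∃ n, 1 ≤ n ∧
        p = MvPolynomial.weightedHomogeneousComponent (lagWeight d) n (lagF d)} ∪
      {p | ∃ i : Fin d, (i : ℕ) = d - 1 ∧ p = MvPolynomial.X i})


set_option maxHeartbeats 1600000

noncomputable def lagS (d : ℕ) (i : Fin d) : MvPolynomial (Fin d) ℚ :=
  if (i : ℕ) + 1 ≤ d - 1 then MvPolynomial.X i else 0

noncomputable def lagT (d : ℕ) (i : Fin d) : MvPolynomial (Fin d) ℚ :=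
  if (i : ℕ) + 1 ≤ d - 1 then (-1) ^ ((i : ℕ) + 1) * MvPolynomial.X i else 0

lemma lagS_hom (d : ℕ) (i : Fin d) :
    (lagS d i).IsWeightedHomogeneous (lagWeight d) ((i : ℕ) + 1) := by
  unfold lagS
  split_ifs
  · exact isWeightedHomogeneous_X _ _ _
  · exact isWeightedHomogeneous_zero _ _ _

lemma lagT_hom (d : ℕ) (i : Fin d) :
    (lagT d i).IsWeightedHomogeneous (lagWeight d) ((i : ℕ) + 1) := by
  unfold lagT
  split_ifs
  · have h : ((-1 : MvPolynomial (Fin d) ℚ) ^ ((i : ℕ) + 1) * X i)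
        = C ((-1 : ℚ) ^ ((i : ℕ) + 1)) * X i := by
      simp
    rw [h]
    have := (isWeightedHomogeneous_C (lagWeight d) ((-1 : ℚ) ^ ((i : ℕ) + 1))).mul
      (isWeightedHomogeneous_X _ (lagWeight d) i)
    simpa [lagWeight] using this
  · exact isWeightedHomogeneous_zero _ _ _

lemma lagF_eq (d : ℕ) :
    lagF d = (∑ i : Fin d, lagS d i) + (∑ i : Fin d, lagT d i)
      + ∑ i : Fin d, ∑ j : Fin d, lagS d i * lagT d j := by
  rw [← Finset.sum_mul_sum]
  unfold lagF lagS lagT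
  ring

lemma lag_comp (d n : ℕ) :
    MvPolynomial.weightedHomogeneousComponent (lagWeight d) n (lagF d)
      = (∑ i : Fin d, if n = (i : ℕ) + 1 then lagS d i else 0)
        + (∑ i : Fin d, if n = (i : ℕ) + 1 then lagT d i else 0)
        + ∑ i : Fin d, ∑ j : Fin d,
            if n = (i : ℕ) + (j : ℕ) + 2 then lagS d i * lagT d j else 0 := by
  rw [lagF_eq, map_add, map_add, map_sum, map_sum, map_sum]
  congr 1
  · congr 1
    · exact Finset.sum_congr rfl fun i _ =>
        weightedHomogeneousComponent_of_mem
          ((mem_weightedHomogeneousSubmodule _ _ _ _).2 (lagS_hom d i))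
    · exact Finset.sum_congr rfl fun i _ =>
        weightedHomogeneousComponent_of_mem
          ((mem_weightedHomogeneousSubmodule _ _ _ _).2 (lagT_hom d i))
  · refine Finset.sum_congr rfl fun i _ => ?_
    rw [map_sum]
    refine Finset.sum_congr rfl fun j _ => ?_
    have h := weightedHomogeneousComponent_of_mem
      ((mem_weightedHomogeneousSubmodule _ _ _ _).2 ((lagS_hom d i).mul (lagT_hom d j)))
      (m := n)
    rw [h]
    congr 1
    simp only [eq_iff_iff]
    omega

def lagSq (d : ℕ) (α : Fin d →₀ ℕ) : ℕ := ∑ i : Fin d, α i * ((i : ℕ) + 1) ^ 2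

lemma lagWt_eq (d : ℕ) (α : Fin d →₀ ℕ) :
    Finsupp.weight (lagWeight d) α = ∑ i : Fin d, α i * ((i : ℕ) + 1) := by
  rw [Finsupp.weight_apply, Finsupp.sum_fintype]
  · simp [lagWeight, smul_eq_mul]
  · intro i; simp

lemma lagSq_add (d : ℕ) (α β : Fin d →₀ ℕ) :
    lagSq d (α + β) = lagSq d α + lagSq d β := by
  simp [lagSq, add_mul, Finset.sum_add_distrib]

lemma lagSq_single (d : ℕ) (i : Fin d) (c : ℕ) :
    lagSq d (Finsupp.single i c) = c * ((i : ℕ) + 1) ^ 2 := by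
  simp [lagSq, Finsupp.single_apply]

lemma lagWt_single (d : ℕ) (i : Fin d) (c : ℕ) :
    Finsupp.weight (lagWeight d) (Finsupp.single i c) = c * ((i : ℕ) + 1) := by
  rw [lagWt_eq]
  simp [Finsupp.single_apply]

lemma lagSq_le (d : ℕ) (α : Fin d →₀ ℕ) :
    lagSq d α ≤ d * Finsupp.weight (lagWeight d) α := by
  rw [lagWt_eq, Finset.mul_sum, lagSq]
  refine Finset.sum_le_sum fun i _ => ?_
  have : (i : ℕ) + 1 ≤ d := i.2
  calc α i * ((i : ℕ) + 1) ^ 2 = (α i * ((i : ℕ) + 1)) * ((i : ℕ) + 1) := by ring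
    _ ≤ (α i * ((i : ℕ) + 1)) * d := Nat.mul_le_mul_left _ this
    _ = d * (α i * ((i : ℕ) + 1)) := by ring

lemma lag_sq_gt (k a b : ℕ) (hab : a + b = 2 * k) (ha : a ≠ k) :
    2 * k ^ 2 < a ^ 2 + b ^ 2 := by
  rcases lt_or_gt_of_ne ha with h | h <;> nlinarith

lemma lagXmul (d : ℕ) (β : Fin d →₀ ℕ) (i : Fin d) :
    (X i : MvPolynomial (Fin d) ℚ) * monomial β 1
      = monomial (β + Finsupp.single i 1) 1 := by
  rw [monomial_add_single, pow_one, mul_comm]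

lemma lag_monomial_mem (d : ℕ) : ∀ (t : ℕ) (α : Fin d →₀ ℕ),
    d * (Finsupp.weight (lagWeight d) α) - lagSq d α < t →
    d * (d - 1) / 2 < Finsupp.weight (lagWeight d) α →
    (monomial α (1 : ℚ)) ∈ lagIdeal d := by
  intro t
  induction t with
  | zero => intro α hm hw; omega
  | succ t ih =>
    intro α hm hw
    have hd : 0 < d := by
      by_contra hd
      have hd0 : d = 0 := by omega
      subst hd0
      have hα0 : α = 0 := Finsupp.ext fun i => i.elim0
      rw [hα0] at hw
      simp at hw
    set D : Fin d := ⟨d - 1, by omega⟩ with hDdef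
    by_cases hD : α D = 0
    · by_cases hsq : ∃ v : Fin d, 2 ≤ α v
      · obtain ⟨v, hv2⟩ := hsq
        have hvD : v ≠ D := by
          intro h; rw [h, hD] at hv2; omega
        have hvlt : (v : ℕ) + 1 ≤ d - 1 := by
          have h1 : (v : ℕ) < d := v.2
          have h2 : (v : ℕ) ≠ d - 1 := fun h => hvD (Fin.ext (by simp [hDdef, h]))
          omega
        set k : ℕ := (v : ℕ) + 1 with hk
        have hkpos : 0 < k := by omega
        set β := α - Finsupp.single v 2 with hβ
        have hαβ : β + Finsupp.single v 2 = α := by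
          rw [hβ]
          ext i
          rcases eq_or_ne v i with h | h
          · subst h
            simp only [Finsupp.add_apply, Finsupp.tsub_apply, Finsupp.single_eq_same]
            omega
          · simp [Finsupp.tsub_apply, Finsupp.single_eq_of_ne' h]
        have hwtβ : Finsupp.weight (lagWeight d) α
            = Finsupp.weight (lagWeight d) β + 2 * k := by
          rw [← hαβ, map_add, lagWt_single]
        have hsqβ : lagSq d α = lagSq d β + 2 * k ^ 2 := by
          rw [← hαβ, lagSq_add, lagSq_single]
        -- helper for recursive calls
        have key : ∀ γ : Fin d →₀ ℕ,
            Finsupp.weight (lagWeight d) γ = Finsupp.weight (lagWeight d) α →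
            lagSq d α < lagSq d γ → monomial γ (1 : ℚ) ∈ lagIdeal d := by
          intro γ hwγ hsγ
          refine ih γ ?_ (by rw [hwγ]; exact hw)
          have h1 := lagSq_le d γ
          rw [hwγ] at h1
          rw [hwγ]
          exact lt_of_lt_of_le (Nat.sub_lt_sub_left (lt_of_lt_of_le hsγ h1) hsγ)
            (Nat.lt_succ_iff.mp hm)
        -- the relation polynomial
        set G := MvPolynomial.weightedHomogeneousComponent (lagWeight d) (2 * k) (lagF d)
          with hGdef
        have hG : G ∈ lagIdeal d :=
          Ideal.subset_span (Or.inl ⟨2 * k, by omega, rfl⟩)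
        set A := ∑ i : Fin d, if 2 * k = (i : ℕ) + 1 then lagS d i else 0 with hA
        set B := ∑ i : Fin d, if 2 * k = (i : ℕ) + 1 then lagT d i else 0 with hB
        have hCsum : (∑ i : Fin d, ∑ j : Fin d,
              if 2 * k = (i : ℕ) + (j : ℕ) + 2 then lagS d i * lagT d j else 0)
            = ∑ p ∈ (Finset.univ ×ˢ Finset.univ : Finset (Fin d × Fin d)),
                (if 2 * k = (p.1 : ℕ) + (p.2 : ℕ) + 2 then lagS d p.1 * lagT d p.2 else 0) := by
          rw [Finset.sum_product]
        set Crest := ∑ p ∈ ((Finset.univ ×ˢ Finset.univ : Finset (Fin d × Fin d))).erase (v, v),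
            (if 2 * k = (p.1 : ℕ) + (p.2 : ℕ) + 2 then lagS d p.1 * lagT d p.2 else 0)
          with hCrest
        have hmemvv : (v, v) ∈ (Finset.univ ×ˢ Finset.univ : Finset (Fin d × Fin d)) := by
          simp
        have hsplit : (∑ p ∈ (Finset.univ ×ˢ Finset.univ : Finset (Fin d × Fin d)),
              (if 2 * k = (p.1 : ℕ) + (p.2 : ℕ) + 2 then lagS d p.1 * lagT d p.2 else 0))
            = (if 2 * k = (v : ℕ) + (v : ℕ) + 2 then lagS d v * lagT d v else 0) + Crest := by
          rw [hCrest, ← Finset.sum_erase_add _ _ hmemvv]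
          ring
        have hfvv : (if 2 * k = (v : ℕ) + (v : ℕ) + 2 then lagS d v * lagT d v else 0)
            = lagS d v * lagT d v := if_pos (by omega)
        have hG2 : G = A + B + (lagS d v * lagT d v + Crest) := by
          rw [hGdef, lag_comp, hCsum, hsplit, hfvv, ← hA, ← hB]
        have h5 : lagS d v * lagT d v = G - A - B - Crest := by
          rw [hG2]; ring
        have hSv : lagS d v = X v := if_pos hvlt
        have hTv : lagT d v = (-1) ^ k * X v := by
          rw [lagT, if_pos hvlt, hk]
        have hneg : ((-1 : MvPolynomial (Fin d) ℚ)) ^ k * (-1) ^ k = 1 := by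
          rw [← pow_add]
          exact Even.neg_one_pow ⟨k, rfl⟩
        have hXv2 : (X v : MvPolynomial (Fin d) ℚ) ^ 2 = (-1) ^ k * (lagS d v * lagT d v) := by
          rw [hSv, hTv]
          linear_combination (-(X v ^ 2 : MvPolynomial (Fin d) ℚ)) * hneg
        have hmono : monomial α (1 : ℚ) = monomial β 1 * X v ^ 2 := by
          rw [← monomial_add_single, hαβ]
        have hkey : monomial α (1 : ℚ)
            = (-1) ^ k * (monomial β 1 * G) - (-1) ^ k * (A * monomial β 1)
              - (-1) ^ k * (B * monomial β 1) - (-1) ^ k * (Crest * monomial β 1) := by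
          rw [hmono, hXv2, h5]; ring
        rw [hkey]
        have hAmem : A * monomial β (1 : ℚ) ∈ lagIdeal d := by
          rw [hA, Finset.sum_mul]
          refine Ideal.sum_mem _ fun i _ => ?_
          rcases eq_or_ne (2 * k) ((i : ℕ) + 1) with h | h
          · rw [if_pos h, lagS]
            split_ifs with hc
            · rw [lagXmul]
              refine key _ ?_ ?_
              · rw [map_add, lagWt_single, hwtβ]; omega
              · rw [lagSq_add, lagSq_single, hsqβ, one_mul, ← h]
                nlinarith
            · rw [zero_mul]; exact Ideal.zero_mem _
          · rw [if_neg h, zero_mul]; exact Ideal.zero_mem _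
        have hBmem : B * monomial β (1 : ℚ) ∈ lagIdeal d := by
          rw [hB, Finset.sum_mul]
          refine Ideal.sum_mem _ fun i _ => ?_
          rcases eq_or_ne (2 * k) ((i : ℕ) + 1) with h | h
          · rw [if_pos h, lagT]
            split_ifs with hc
            · rw [mul_assoc, lagXmul]
              refine Ideal.mul_mem_left _ _ (key _ ?_ ?_)
              · rw [map_add, lagWt_single, hwtβ]; omega
              · rw [lagSq_add, lagSq_single, hsqβ, one_mul, ← h]
                nlinarith
            · rw [zero_mul]; exact Ideal.zero_mem _
          · rw [if_neg h, zero_mul]; exact Ideal.zero_mem _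
        have hCmem : Crest * monomial β (1 : ℚ) ∈ lagIdeal d := by
          rw [hCrest, Finset.sum_mul]
          refine Ideal.sum_mem _ fun p hp => ?_
          obtain ⟨i, j⟩ := p
          have hpne : (i, j) ≠ (v, v) := (Finset.mem_erase.mp hp).1
          by_cases hcnd : 2 * k = (i : ℕ) + (j : ℕ) + 2
          · rw [if_pos hcnd, lagS, lagT]
            split_ifs with h1 h2
            · have hik : (i : ℕ) + 1 ≠ k := by
                intro h
                apply hpne
                have hi : i = v := Fin.ext (by omega)
                have hj : j = v := Fin.ext (by omega)
                rw [hi, hj]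
              have hprod : (X i * ((-1 : MvPolynomial (Fin d) ℚ) ^ ((j : ℕ) + 1) * X j))
                    * monomial β 1
                  = (-1) ^ ((j : ℕ) + 1)
                    * monomial (β + Finsupp.single j 1 + Finsupp.single i 1) 1 := by
                rw [show (X i * ((-1 : MvPolynomial (Fin d) ℚ) ^ ((j : ℕ) + 1) * X j))
                      * monomial β 1
                    = (-1) ^ ((j : ℕ) + 1) * (X i * (X j * monomial β 1)) from by ring,
                  lagXmul, lagXmul]
              rw [hprod]
              refine Ideal.mul_mem_left _ _ (key _ ?_ ?_)
              · rw [map_add, map_add, lagWt_single, lagWt_single, hwtβ]; omega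
              · rw [lagSq_add, lagSq_add, lagSq_single, lagSq_single, hsqβ, one_mul, one_mul]
                have h6 := lag_sq_gt k ((i : ℕ) + 1) ((j : ℕ) + 1) (by omega) hik
                linarith
            all_goals simp only [mul_zero, zero_mul]
            all_goals exact Ideal.zero_mem _
          · rw [if_neg hcnd, zero_mul]; exact Ideal.zero_mem _
        exact Ideal.sub_mem _
          (Ideal.sub_mem _
            (Ideal.sub_mem _ (Ideal.mul_mem_left _ _ (Ideal.mul_mem_left _ _ hG))
              (Ideal.mul_mem_left _ _ hAmem))
            (Ideal.mul_mem_left _ _ hBmem))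
          (Ideal.mul_mem_left _ _ hCmem)
      · -- square-free case: contradiction with the weight bound
        exfalso
        push_neg at hsq
        have hbound : (Finsupp.weight (lagWeight d) α : ℕ)
            ≤ ∑ i : Fin d, (if (i : ℕ) = d - 1 then 0 else (i : ℕ) + 1) := by
          rw [lagWt_eq]
          refine Finset.sum_le_sum fun i _ => ?_
          by_cases hi : (i : ℕ) = d - 1
          · have hiD : i = D := Fin.ext (by simp [hDdef, hi])
            rw [if_pos hi, hiD, hD]
            simp
          · rw [if_neg hi]
            have h1 : α i ≤ 1 := by have := hsq i; omega
            nlinarith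
        have hrange : (∑ i : Fin d, (if (i : ℕ) = d - 1 then 0 else (i : ℕ) + 1))
            = ∑ m ∈ Finset.range d, (if m = d - 1 then 0 else m + 1) :=
          Fin.sum_univ_eq_sum_range (fun m => if m = d - 1 then 0 else m + 1) d
        obtain ⟨e, he⟩ : ∃ e, d = e + 1 := ⟨d - 1, by omega⟩
        subst he
        have hstep : (∑ m ∈ Finset.range (e + 1), (if m = e + 1 - 1 then 0 else m + 1))
            = ∑ m ∈ Finset.range e, (m + 1) := by
          rw [Finset.sum_range_succ]
          simp only [Nat.add_sub_cancel, if_pos, add_zero, if_true, eq_self_iff_true]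
          refine Finset.sum_congr rfl fun m hm => ?_
          rw [if_neg (by have := Finset.mem_range.mp hm; omega)]
        have hshift : (∑ m ∈ Finset.range (e + 1), m) = ∑ m ∈ Finset.range e, (m + 1) := by
          rw [Finset.sum_range_succ']
          simp
        have hgauss := Finset.sum_range_id_mul_two (e + 1)
        have hde : (e + 1) * (e + 1 - 1) = (∑ m ∈ Finset.range e, (m + 1)) * 2 := by
          rw [← hshift, hgauss]
        rw [hde] at hw
        rw [hrange, hstep] at hbound
        omega
    · -- α D ≠ 0 : divisible by u_d
      have hXD : X D ∈ lagIdeal d := Ideal.subset_span (Or.inr ⟨D, rfl, rfl⟩)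
      have hα : α = (α - Finsupp.single D 1) + Finsupp.single D 1 := by
        ext i
        rcases eq_or_ne D i with h | h
        · subst h
          simp only [Finsupp.add_apply, Finsupp.tsub_apply, Finsupp.single_eq_same]
          omega
        · simp [Finsupp.tsub_apply, Finsupp.single_eq_of_ne' h]
      have : monomial α (1 : ℚ) = monomial (α - Finsupp.single D 1) 1 * X D := by
        conv_lhs => rw [hα]
        rw [monomial_add_single, pow_one]
      rw [this]
      exact Ideal.mul_mem_left _ _ hXD

/-- In `R_d`, every weighted-homogeneous element of degree `> d(d-1)/2` vanishes,
i.e. every nonzero homogeneous element of `R_d` has degree at most `d(d-1)/2`. -/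
theorem lag_top_degree_bound (d n : ℕ) (P : MvPolynomial (Fin d) ℚ)
    (hP : P.IsWeightedHomogeneous (lagWeight d) n) (hn : d * (d - 1) / 2 < n) :
    P ∈ lagIdeal d := by
  rw [← P.support_sum_monomial_coeff]
  refine Ideal.sum_mem _ fun m hm => ?_
  have hc : coeff m P ≠ 0 := MvPolynomial.mem_support_iff.mp hm
  have hwm : Finsupp.weight (lagWeight d) m = n := hP hc
  have h1 : (monomial m (1 : ℚ)) ∈ lagIdeal d := by
    refine lag_monomial_mem d (d * n - lagSq d m + 1) m ?_ ?_
    · rw [hwm]; omega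
    · rw [hwm]; exact hn
  have : monomial m (coeff m P) = C (coeff m P) * monomial m 1 := by
    rw [C_mul_monomial, mul_one]
  rw [this]
  exact Ideal.mul_mem_left _ _ h1
end

section
/- In the ring R_d = ℚ[u_1,…,u_d]/((1+∑_{j=1}^{d-1}u_j)(1+∑_{j=1}^{d-1}(-1)^j u_j) = 1, u_d = 0), the monomials u_{j_1}⋯u_{j_m} with 1 ≤ j_1 < ⋯ < j_m < d (together with 1) form a ℚ-vector space basis. -/
open scoped BigOperators

namespace LagAux

open MvPolynomial Finset

variable {d : ℕ}

/-- weighted degree of an exponent vector -/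
def wdeg (μ : Fin d →₀ ℕ) : ℕ := ∑ i : Fin d, ((i : ℕ) + 1) * μ i

def Lm (μ : Fin d →₀ ℕ) : ℕ := ∑ i : Fin d, μ i * 3 ^ (i : ℕ)

def Km (μ : Fin d →₀ ℕ) : ℕ := 3 ^ d * wdeg μ - Lm μ

lemma wdeg_add (μ ν : Fin d →₀ ℕ) : wdeg (μ + ν) = wdeg μ + wdeg ν := by
  simp [wdeg, Finsupp.add_apply, Nat.mul_add, Finset.sum_add_distrib]

lemma Lm_add (μ ν : Fin d →₀ ℕ) : Lm (μ + ν) = Lm μ + Lm ν := by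
  simp [Lm, Finsupp.add_apply, Nat.add_mul, Finset.sum_add_distrib]

lemma wdeg_single (a : Fin d) (k : ℕ) : wdeg (Finsupp.single a k) = ((a : ℕ) + 1) * k := by
  simp [wdeg, Finsupp.single_apply]

lemma Lm_single (a : Fin d) (k : ℕ) : Lm (Finsupp.single a k) = k * 3 ^ (a : ℕ) := by
  simp [Lm, Finsupp.single_apply]

lemma Lm_le (μ : Fin d →₀ ℕ) : Lm μ ≤ 3 ^ d * wdeg μ := by
  rw [Lm, wdeg, Finset.mul_sum]
  refine Finset.sum_le_sum fun i _ => ?_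
  calc μ i * 3 ^ (i : ℕ) ≤ μ i * 3 ^ d := by
        exact Nat.mul_le_mul_left _ (Nat.pow_le_pow_right (by norm_num) (le_of_lt i.isLt))
    _ = 3 ^ d * μ i := Nat.mul_comm _ _
    _ ≤ 3 ^ d * (((i : ℕ) + 1) * μ i) := Nat.mul_le_mul_left _ (Nat.le_mul_of_pos_left _ (Nat.succ_pos _))

lemma Km_lt {μ τ : Fin d →₀ ℕ} (h1 : wdeg τ = wdeg μ) (h2 : Lm μ < Lm τ) : Km τ < Km μ := by
  have h3 := Lm_le τ
  have h4 := Lm_le μ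
  unfold Km
  rw [h1] at h3 ⊢
  omega


noncomputable def lagA (d : ℕ) (n : ℕ) : MvPolynomial (Fin d) ℚ :=
  ∑ i : Fin d, if ((i : ℕ) + 1 ≤ d - 1 ∧ (i : ℕ) + 1 = n) then (1 + (-1 : ℚ) ^ n) • X i else 0

noncomputable def lagB (d : ℕ) (n : ℕ) : MvPolynomial (Fin d) ℚ :=
  ∑ i : Fin d, ∑ j : Fin d,
    if ((i : ℕ) + 1 ≤ d - 1 ∧ (j : ℕ) + 1 ≤ d - 1 ∧ (i : ℕ) + (j : ℕ) + 2 = n) then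
      ((-1 : ℚ) ^ ((j : ℕ) + 1)) • (X i * X j) else 0

noncomputable def lagBoff (d : ℕ) (i : Fin d) : MvPolynomial (Fin d) ℚ :=
  ∑ a : Fin d, ∑ b : Fin d,
    if ((a : ℕ) + 1 ≤ d - 1 ∧ (b : ℕ) + 1 ≤ d - 1 ∧ (a : ℕ) + (b : ℕ) + 2 = 2 * ((i : ℕ) + 1)
        ∧ ¬(a = i ∧ b = i)) then
      ((-1 : ℚ) ^ ((b : ℕ) + 1)) • (X a * X b) else 0

noncomputable def lagR (d : ℕ) (i : Fin d) : MvPolynomial (Fin d) ℚ :=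
  lagA d (2 * ((i : ℕ) + 1)) + lagBoff d i

noncomputable def lagG (d : ℕ) (i : Fin d) : MvPolynomial (Fin d) ℚ :=
  ((-1 : ℚ) ^ ((i : ℕ) + 1)) • (X i * X i) + lagR d i

lemma X_mul_X (a b : Fin d) :
    (X a * X b : MvPolynomial (Fin d) ℚ) =
      monomial (Finsupp.single a 1 + Finsupp.single b 1) 1 := by
  rw [X, X, monomial_mul, one_mul]

lemma lagR_support (i : Fin d) :
    ∀ σ ∈ (lagR d i).support, wdeg σ = 2 * ((i : ℕ) + 1) ∧ 2 * 3 ^ (i : ℕ) < Lm σ := by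
  intro σ hσ
  classical
  rw [lagR] at hσ
  have hσ' := Finsupp.support_add hσ
  rw [Finset.mem_union] at hσ'
  rcases hσ' with hσ' | hσ'
  · -- lagA part
    have := support_sum hσ'
    rw [Finset.mem_biUnion] at this
    obtain ⟨c, -, hc⟩ := this
    split_ifs at hc with h
    · have hc' := support_smul hc
      rw [support_X] at hc'
      rw [Finset.mem_singleton] at hc'
      subst hc'
      obtain ⟨h1, h2⟩ := h
      constructor
      · rw [wdeg_single, Nat.mul_one, h2]
      · rw [Lm_single, one_mul]
        have hci : (i : ℕ) + 1 ≤ (c : ℕ) := by omega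
        calc 2 * 3 ^ (i : ℕ) < 3 * 3 ^ (i : ℕ) := by
              have : 0 < 3 ^ (i : ℕ) := Nat.pow_pos (by norm_num)
              omega
          _ = 3 ^ ((i : ℕ) + 1) := by rw [pow_succ]; ring
          _ ≤ 3 ^ (c : ℕ) := Nat.pow_le_pow_right (by norm_num) hci
    · simp at hc
  · -- lagBoff part
    have := support_sum hσ'
    rw [Finset.mem_biUnion] at this
    obtain ⟨a, -, ha⟩ := this
    have := support_sum ha
    rw [Finset.mem_biUnion] at this
    obtain ⟨b, -, hb⟩ := this
    split_ifs at hb with h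
    · have hb' := support_smul hb
      rw [X_mul_X, support_monomial] at hb'
      simp only [one_ne_zero, if_false, Finset.mem_singleton] at hb'
      subst hb'
      obtain ⟨h1, h2, h3, h4⟩ := h
      have h4' : ¬((a : ℕ) = (i : ℕ) ∧ (b : ℕ) = (i : ℕ)) := by
        intro hcon
        exact h4 ⟨Fin.ext hcon.1, Fin.ext hcon.2⟩
      have hpow : ∀ k : ℕ, 0 < 3 ^ k := fun k => Nat.pow_pos (by norm_num)
      constructor
      · rw [wdeg_add, wdeg_single, wdeg_single]
        omega
      · rw [Lm_add, Lm_single, Lm_single, one_mul, one_mul]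
        have key : (i : ℕ) + 1 ≤ (a : ℕ) ∨ (i : ℕ) + 1 ≤ (b : ℕ) := by omega
        have h3i := hpow (i : ℕ)
        rcases key with hk | hk
        · have : 3 ^ ((i : ℕ) + 1) ≤ 3 ^ (a : ℕ) := Nat.pow_le_pow_right (by norm_num) hk
          rw [pow_succ] at this
          have := hpow (b : ℕ)
          omega
        · have : 3 ^ ((i : ℕ) + 1) ≤ 3 ^ (b : ℕ) := Nat.pow_le_pow_right (by norm_num) hk
          rw [pow_succ] at this
          have := hpow (a : ℕ)
          omega
    · simp at hb


noncomputable def rwPoly (d : ℕ) (μ : Fin d →₀ ℕ) (a : Fin d) : MvPolynomial (Fin d) ℚ :=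
  ((-1 : ℚ) ^ (a : ℕ)) • (monomial (μ - Finsupp.single a 2) 1 * lagR d a)

lemma rwPoly_support {μ : Fin d →₀ ℕ} {a : Fin d} (hμ : 2 ≤ μ a) :
    ∀ τ ∈ (rwPoly d μ a).support, wdeg τ = wdeg μ ∧ Lm μ < Lm τ := by
  intro τ hτ
  classical
  rw [rwPoly] at hτ
  have h1 := support_mul _ _ (support_smul hτ)
  rw [Finset.mem_add] at h1
  obtain ⟨ν, hν, σ, hσ, rfl⟩ := h1
  rw [support_monomial] at hν
  simp only [one_ne_zero, if_false, Finset.mem_singleton] at hν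
  subst hν
  obtain ⟨hw, hl⟩ := lagR_support a σ hσ
  have hself : μ - Finsupp.single a 2 + Finsupp.single a 2 = μ :=
    tsub_add_cancel_of_le (by rwa [Finsupp.single_le_iff])
  have e1 : wdeg μ = wdeg (μ - Finsupp.single a 2) + ((a : ℕ) + 1) * 2 := by
    conv_lhs => rw [← hself]
    rw [wdeg_add, wdeg_single]
  have e2 : Lm μ = Lm (μ - Finsupp.single a 2) + 2 * 3 ^ (a : ℕ) := by
    conv_lhs => rw [← hself]
    rw [Lm_add, Lm_single]
  constructor
  · rw [wdeg_add, hw]; omega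
  · rw [Lm_add]; omega


def leastSq (μ : Fin d →₀ ℕ) (h : ∃ i, 2 ≤ μ i) : Fin d :=
  (Finset.univ.filter fun i => 2 ≤ μ i).min' (by
    obtain ⟨i, hi⟩ := h
    exact ⟨i, Finset.mem_filter.mpr ⟨Finset.mem_univ _, hi⟩⟩)

lemma leastSq_mem (μ : Fin d →₀ ℕ) (h : ∃ i, 2 ≤ μ i) : 2 ≤ μ (leastSq μ h) := by
  unfold leastSq
  have h' := Finset.min'_mem (Finset.univ.filter fun i => 2 ≤ μ i) (by
    obtain ⟨i, hi⟩ := h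
    exact ⟨i, Finset.mem_filter.mpr ⟨Finset.mem_univ _, hi⟩⟩)
  rw [Finset.mem_filter] at h'
  exact h'.2

lemma leastSq_le (μ : Fin d →₀ ℕ) (h : ∃ i, 2 ≤ μ i) {j : Fin d} (hj : 2 ≤ μ j) :
    leastSq μ h ≤ j := by
  unfold leastSq
  exact Finset.min'_le _ j (Finset.mem_filter.mpr ⟨Finset.mem_univ _, hj⟩)

noncomputable def NFmono (d : ℕ) (μ : Fin d →₀ ℕ) :
    ({S : Finset (Fin d) // ∀ i ∈ S, (i : ℕ) + 1 < d} →₀ ℚ) :=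
  if h0 : ∃ i : Fin d, (i : ℕ) = d - 1 ∧ μ i ≠ 0 then 0
  else if h : ∃ i, 2 ≤ μ i then
    ∑ τ ∈ (rwPoly d μ (leastSq μ h)).support.attach,
      (rwPoly d μ (leastSq μ h)).coeff τ.1 • NFmono d τ.1
  else
    Finsupp.single ⟨μ.support, by
      intro i hi
      have h1 : ¬((i : ℕ) = d - 1 ∧ μ i ≠ 0) := fun hc => h0 ⟨i, hc⟩
      have h2 : μ i ≠ 0 := Finsupp.mem_support_iff.mp hi
      have h3 := i.isLt
      omega⟩ 1
termination_by Km μ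
decreasing_by
  have ha := leastSq_mem μ h
  obtain ⟨hw, hl⟩ := rwPoly_support ha τ.1 τ.2
  exact Km_lt hw hl


lemma NFmono_last {μ : Fin d →₀ ℕ} (h0 : ∃ i : Fin d, (i : ℕ) = d - 1 ∧ μ i ≠ 0) :
    NFmono d μ = 0 := by
  rw [NFmono, dif_pos h0]

lemma NFmono_sq {μ : Fin d →₀ ℕ} (h0 : ¬∃ i : Fin d, (i : ℕ) = d - 1 ∧ μ i ≠ 0)
    (h : ∃ i, 2 ≤ μ i) :
    NFmono d μ = ∑ τ ∈ (rwPoly d μ (leastSq μ h)).support.attach,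
      (rwPoly d μ (leastSq μ h)).coeff τ.1 • NFmono d τ.1 := by
  rw [NFmono, dif_neg h0, dif_pos h]

lemma NFmono_sqfree {μ : Fin d →₀ ℕ} (h0 : ¬∃ i : Fin d, (i : ℕ) = d - 1 ∧ μ i ≠ 0)
    (h : ¬∃ i, 2 ≤ μ i) (pf : ∀ i ∈ μ.support, (i : ℕ) + 1 < d) :
    NFmono d μ = Finsupp.single ⟨μ.support, pf⟩ 1 := by
  rw [NFmono, dif_neg h0, dif_neg h]

noncomputable def NF (d : ℕ) :
    MvPolynomial (Fin d) ℚ →ₗ[ℚ] ({S : Finset (Fin d) // ∀ i ∈ S, (i : ℕ) + 1 < d} →₀ ℚ) :=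
  (Finsupp.lsum ℚ fun τ => LinearMap.toSpanSingleton ℚ _ (NFmono d τ)).comp
    (AddMonoidAlgebra.coeffLinearEquiv ℚ).toLinearMap

lemma NF_monomial (τ : Fin d →₀ ℕ) (c : ℚ) : NF d (monomial τ c) = c • NFmono d τ := by
  rw [NF, LinearMap.comp_apply, LinearEquiv.coe_coe, show (AddMonoidAlgebra.coeffLinearEquiv ℚ
    (monomial τ c : MvPolynomial (Fin d) ℚ)) = Finsupp.single τ c from rfl]
  exact Finsupp.sum_single_index (by simp)

lemma NF_eq_sum (p : MvPolynomial (Fin d) ℚ) :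
    NF d p = ∑ τ ∈ p.support, p.coeff τ • NFmono d τ := by
  conv_lhs => rw [p.as_sum]
  rw [map_sum]
  exact Finset.sum_congr rfl fun τ _ => NF_monomial τ _


lemma whc_lagF (n : ℕ) :
    MvPolynomial.weightedHomogeneousComponent (lagWeight d) n (lagF d) = lagA d n + lagB d n := by
  classical
  have hF : lagF d = (∑ i : Fin d, if (i : ℕ) + 1 ≤ d - 1 then X i else 0)
      + (∑ i : Fin d, if (i : ℕ) + 1 ≤ d - 1 then ((-1 : ℚ) ^ ((i : ℕ) + 1)) • X i else 0)
      + (∑ i : Fin d, if (i : ℕ) + 1 ≤ d - 1 then X i else 0) *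
        (∑ i : Fin d, if (i : ℕ) + 1 ≤ d - 1 then ((-1 : ℚ) ^ ((i : ℕ) + 1)) • X i else 0) := by
    rw [lagF]
    have he : ∀ i : Fin d,
        (if (i : ℕ) + 1 ≤ d - 1 then ((-1) ^ ((i : ℕ) + 1) * X i : MvPolynomial (Fin d) ℚ) else 0)
          = (if (i : ℕ) + 1 ≤ d - 1 then ((-1 : ℚ) ^ ((i : ℕ) + 1)) • X i else 0) := by
      intro i
      split_ifs
      · rw [← C_mul', map_pow, map_neg, map_one]
      · rfl
    rw [Finset.sum_congr rfl fun i _ => he i]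
    ring
  rw [hF, map_add, map_add]
  have hS : MvPolynomial.weightedHomogeneousComponent (lagWeight d) n
        (∑ i : Fin d, if (i : ℕ) + 1 ≤ d - 1 then (X i : MvPolynomial (Fin d) ℚ) else 0)
      = ∑ i : Fin d, if ((i : ℕ) + 1 ≤ d - 1 ∧ (i : ℕ) + 1 = n) then (X i : MvPolynomial (Fin d) ℚ)
          else 0 := by
    rw [map_sum]
    refine Finset.sum_congr rfl fun i _ => ?_
    have hX := isWeightedHomogeneous_X (R := ℚ) (lagWeight d) i
    by_cases h1 : (i : ℕ) + 1 ≤ d - 1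
    · rw [if_pos h1]
      by_cases h2 : (i : ℕ) + 1 = n
      · rw [if_pos ⟨h1, h2⟩]
        have hX' : IsWeightedHomogeneous (lagWeight d) (X i : MvPolynomial (Fin d) ℚ) n := by
          rwa [show lagWeight d i = n from h2] at hX
        exact hX'.weightedHomogeneousComponent_same
      · rw [if_neg (fun hc => h2 hc.2)]
        exact hX.weightedHomogeneousComponent_ne n (fun hc => h2 hc.symm)
    · rw [if_neg h1, if_neg (fun hc => h1 hc.1), map_zero]
  have hT : MvPolynomial.weightedHomogeneousComponent (lagWeight d) n
        (∑ i : Fin d, if (i : ℕ) + 1 ≤ d - 1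
          then ((-1 : ℚ) ^ ((i : ℕ) + 1)) • (X i : MvPolynomial (Fin d) ℚ) else 0)
      = ∑ i : Fin d, if ((i : ℕ) + 1 ≤ d - 1 ∧ (i : ℕ) + 1 = n)
          then ((-1 : ℚ) ^ ((i : ℕ) + 1)) • (X i : MvPolynomial (Fin d) ℚ) else 0 := by
    rw [map_sum]
    refine Finset.sum_congr rfl fun i _ => ?_
    have hX := isWeightedHomogeneous_X (R := ℚ) (lagWeight d) i
    by_cases h1 : (i : ℕ) + 1 ≤ d - 1
    · rw [if_pos h1, map_smul]
      by_cases h2 : (i : ℕ) + 1 = n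
      · rw [if_pos ⟨h1, h2⟩]
        have hX' : IsWeightedHomogeneous (lagWeight d) (X i : MvPolynomial (Fin d) ℚ) n := by
          rwa [show lagWeight d i = n from h2] at hX
        rw [hX'.weightedHomogeneousComponent_same]
      · rw [if_neg (fun hc => h2 hc.2), hX.weightedHomogeneousComponent_ne n
          (fun hc => h2 hc.symm), smul_zero]
    · rw [if_neg h1, if_neg (fun hc => h1 hc.1), map_zero]
  have hST : MvPolynomial.weightedHomogeneousComponent (lagWeight d) n
        ((∑ i : Fin d, if (i : ℕ) + 1 ≤ d - 1 then (X i : MvPolynomial (Fin d) ℚ) else 0) *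
          (∑ i : Fin d, if (i : ℕ) + 1 ≤ d - 1
            then ((-1 : ℚ) ^ ((i : ℕ) + 1)) • (X i : MvPolynomial (Fin d) ℚ) else 0))
      = lagB d n := by
    rw [Finset.sum_mul_sum, lagB]
    rw [map_sum]
    refine Finset.sum_congr rfl fun i _ => ?_
    rw [map_sum]
    refine Finset.sum_congr rfl fun j _ => ?_
    by_cases h1 : (i : ℕ) + 1 ≤ d - 1
    · by_cases h2 : (j : ℕ) + 1 ≤ d - 1
      · rw [if_pos h1, if_pos h2, mul_smul_comm, map_smul]
        have hXX : IsWeightedHomogeneous (lagWeight d)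
            (X i * X j : MvPolynomial (Fin d) ℚ) ((i : ℕ) + (j : ℕ) + 2) := by
          have := (isWeightedHomogeneous_X (R := ℚ) (lagWeight d) i).mul
            (isWeightedHomogeneous_X (R := ℚ) (lagWeight d) j)
          rwa [show lagWeight d i + lagWeight d j = (i : ℕ) + (j : ℕ) + 2 by
            simp [lagWeight]; omega] at this
        by_cases h3 : (i : ℕ) + (j : ℕ) + 2 = n
        · rw [if_pos ⟨h1, h2, h3⟩]
          rw [show n = (i : ℕ) + (j : ℕ) + 2 from h3.symm]
          rw [hXX.weightedHomogeneousComponent_same]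
        · rw [if_neg (fun hc => h3 hc.2.2), hXX.weightedHomogeneousComponent_ne n
            (fun hc => h3 hc.symm), smul_zero]
      · rw [if_pos h1, if_neg h2, mul_zero, map_zero,
          if_neg (fun hc => h2 hc.2.1)]
    · rw [if_neg h1, zero_mul, map_zero, if_neg (fun hc => h1 hc.1)]
  rw [hS, hT, hST, lagA]
  congr 1
  rw [← Finset.sum_add_distrib]
  refine Finset.sum_congr rfl fun i _ => ?_
  by_cases h : ((i : ℕ) + 1 ≤ d - 1 ∧ (i : ℕ) + 1 = n)
  · rw [if_pos h, if_pos h, if_pos h, add_smul, one_smul]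
    congr 2
    rw [h.2]
  · rw [if_neg h, if_neg h, if_neg h, add_zero]


lemma lagA_odd {n : ℕ} (hn : Odd n) : lagA d n = 0 := by
  rw [lagA]
  refine Finset.sum_eq_zero fun i _ => ?_
  split_ifs
  · rw [hn.neg_one_pow]; norm_num
  · rfl

lemma lagB_odd {n : ℕ} (hn : Odd n) : lagB d n = 0 := by
  classical
  have key : ∀ a b : Fin d,
      (if ((a : ℕ) + 1 ≤ d - 1 ∧ (b : ℕ) + 1 ≤ d - 1 ∧ (a : ℕ) + (b : ℕ) + 2 = n) then
        ((-1 : ℚ) ^ ((b : ℕ) + 1)) • (X a * X b : MvPolynomial (Fin d) ℚ) else 0)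
      = -(if ((b : ℕ) + 1 ≤ d - 1 ∧ (a : ℕ) + 1 ≤ d - 1 ∧ (b : ℕ) + (a : ℕ) + 2 = n) then
        ((-1 : ℚ) ^ ((a : ℕ) + 1)) • (X b * X a : MvPolynomial (Fin d) ℚ) else 0) := by
    intro a b
    by_cases h : ((a : ℕ) + 1 ≤ d - 1 ∧ (b : ℕ) + 1 ≤ d - 1 ∧ (a : ℕ) + (b : ℕ) + 2 = n)
    · rw [if_pos h, if_pos ⟨h.2.1, h.1, by omega⟩]
      rw [mul_comm (X b) (X a), ← neg_smul]
      congr 1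
      have h1 : (-1 : ℚ) ^ ((a : ℕ) + 1) * (-1 : ℚ) ^ ((b : ℕ) + 1) = -1 := by
        rw [← pow_add]
        have : Odd ((a : ℕ) + 1 + ((b : ℕ) + 1)) := by
          obtain ⟨k, hk⟩ := hn
          exact ⟨k, by omega⟩
        exact this.neg_one_pow
      have h2 : (-1 : ℚ) ^ ((a : ℕ) + 1) * (-1 : ℚ) ^ ((a : ℕ) + 1) = 1 := by
        rw [← pow_add]
        refine Even.neg_one_pow ⟨(a : ℕ) + 1, rfl⟩
      linear_combination ((-1 : ℚ) ^ ((a : ℕ) + 1)) * h1 - ((-1 : ℚ) ^ ((b:ℕ)+1)) * h2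
    · rw [if_neg h, if_neg (fun hc => h ⟨hc.2.1, hc.1, by omega⟩), neg_zero]
  have hsum : lagB d n = -lagB d n := by
    conv_lhs => rw [lagB]
    rw [Finset.sum_comm]
    conv_rhs => rw [lagB]
    rw [← Finset.sum_neg_distrib]
    refine Finset.sum_congr rfl fun b _ => ?_
    rw [← Finset.sum_neg_distrib]
    exact Finset.sum_congr rfl fun a _ => key a b
  have h3 : lagB d n + lagB d n = 0 := by
    nth_rewrite 2 [hsum]
    exact add_neg_cancel _
  calc lagB d n = ((2 : ℚ)⁻¹ * 2) • lagB d n := by norm_num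
    _ = (2 : ℚ)⁻¹ • ((2 : ℚ) • lagB d n) := mul_smul _ _ _
    _ = (2 : ℚ)⁻¹ • (lagB d n + lagB d n) := by rw [two_smul]
    _ = 0 := by rw [h3, smul_zero]

lemma lagB_even_split (i : Fin d) (hi : (i : ℕ) + 1 ≤ d - 1) :
    lagB d (2 * ((i : ℕ) + 1)) =
      ((-1 : ℚ) ^ ((i : ℕ) + 1)) • (X i * X i : MvPolynomial (Fin d) ℚ) + lagBoff d i := by
  classical
  have key : ∀ a b : Fin d,
      (if ((a : ℕ) + 1 ≤ d - 1 ∧ (b : ℕ) + 1 ≤ d - 1 ∧ (a : ℕ) + (b : ℕ) + 2 = 2 * ((i : ℕ) + 1))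
        then ((-1 : ℚ) ^ ((b : ℕ) + 1)) • (X a * X b : MvPolynomial (Fin d) ℚ) else 0)
      = (if (a = i ∧ b = i)
          then ((-1 : ℚ) ^ ((i : ℕ) + 1)) • (X i * X i : MvPolynomial (Fin d) ℚ) else 0)
        + (if ((a : ℕ) + 1 ≤ d - 1 ∧ (b : ℕ) + 1 ≤ d - 1 ∧
              (a : ℕ) + (b : ℕ) + 2 = 2 * ((i : ℕ) + 1) ∧ ¬(a = i ∧ b = i))
            then ((-1 : ℚ) ^ ((b : ℕ) + 1)) • (X a * X b : MvPolynomial (Fin d) ℚ) else 0) := by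
    intro a b
    by_cases hab : a = i ∧ b = i
    · obtain ⟨rfl, rfl⟩ := hab
      rw [if_pos ⟨hi, hi, by ring⟩, if_pos ⟨rfl, rfl⟩, if_neg (fun hc => hc.2.2.2 ⟨rfl, rfl⟩),
        add_zero]
    · rw [if_neg hab, zero_add]
      by_cases h : ((a : ℕ) + 1 ≤ d - 1 ∧ (b : ℕ) + 1 ≤ d - 1 ∧
          (a : ℕ) + (b : ℕ) + 2 = 2 * ((i : ℕ) + 1))
      · rw [if_pos h, if_pos ⟨h.1, h.2.1, h.2.2, hab⟩]
      · rw [if_neg h, if_neg (fun hc => h ⟨hc.1, hc.2.1, hc.2.2.1⟩)]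
  rw [lagB, lagBoff]
  rw [Finset.sum_congr rfl fun a _ => Finset.sum_congr rfl fun b _ => key a b]
  rw [Finset.sum_congr rfl fun a (_ : a ∈ Finset.univ) => Finset.sum_add_distrib,
    Finset.sum_add_distrib]
  congr 1
  have inner : ∀ a : Fin d,
      (∑ b : Fin d, if (a = i ∧ b = i)
        then ((-1 : ℚ) ^ ((i : ℕ) + 1)) • (X i * X i : MvPolynomial (Fin d) ℚ) else 0)
      = (if a = i
          then ((-1 : ℚ) ^ ((i : ℕ) + 1)) • (X i * X i : MvPolynomial (Fin d) ℚ) else 0) := by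
    intro a
    by_cases ha : a = i
    · subst ha
      rw [if_pos rfl]
      have : ∀ b : Fin d, (if (a = a ∧ b = a)
          then ((-1 : ℚ) ^ ((a : ℕ) + 1)) • (X a * X a : MvPolynomial (Fin d) ℚ) else 0)
          = (if b = a
            then ((-1 : ℚ) ^ ((a : ℕ) + 1)) • (X a * X a : MvPolynomial (Fin d) ℚ) else 0) := by
        intro b
        by_cases hb : b = a
        · rw [if_pos ⟨rfl, hb⟩, if_pos hb]
        · rw [if_neg (fun hc => hb hc.2), if_neg hb]
      rw [Finset.sum_congr rfl fun b _ => this b, Finset.sum_ite_eq' Finset.univ a]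
      rw [if_pos (Finset.mem_univ a)]
    · rw [if_neg ha]
      exact Finset.sum_eq_zero fun b _ => if_neg (fun hc => ha hc.1)
  rw [Finset.sum_congr rfl fun a _ => inner a, Finset.sum_ite_eq' Finset.univ i,
    if_pos (Finset.mem_univ i)]


lemma whc_classify (n : ℕ) :
    MvPolynomial.weightedHomogeneousComponent (lagWeight d) n (lagF d) = 0 ∨
    ∃ i : Fin d, (i : ℕ) + 1 ≤ d - 1 ∧ 2 * ((i : ℕ) + 1) = n ∧
      MvPolynomial.weightedHomogeneousComponent (lagWeight d) n (lagF d) = lagG d i := by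
  classical
  rw [whc_lagF]
  rcases Nat.even_or_odd n with he | ho
  · obtain ⟨p, hp⟩ := he
    by_cases hp1 : 1 ≤ p ∧ p ≤ d - 1
    · right
      have hd : p - 1 < d := by omega
      refine ⟨⟨p - 1, hd⟩, by simp; omega, by simp; omega, ?_⟩
      have hco : ((⟨p - 1, hd⟩ : Fin d) : ℕ) + 1 = p := by simp; omega
      rw [lagG, lagR]
      have hn2 : n = 2 * (((⟨p - 1, hd⟩ : Fin d) : ℕ) + 1) := by rw [hco]; omega
      rw [hn2, lagB_even_split ⟨p - 1, hd⟩ (by rw [hco]; exact hp1.2)]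
      ring
    · left
      have hA : lagA d n = 0 := by
        refine Finset.sum_eq_zero fun i _ => ?_
        rw [if_neg]
        rintro ⟨h1, h2⟩
        omega
      have hB : lagB d n = 0 := by
        refine Finset.sum_eq_zero fun i _ => Finset.sum_eq_zero fun j _ => ?_
        rw [if_neg]
        rintro ⟨h1, h2, h3⟩
        omega
      rw [hA, hB, add_zero]
  · left
    rw [lagA_odd ho, lagB_odd ho, add_zero]


lemma NFmono_sq' {μ : Fin d →₀ ℕ} (h0 : ¬∃ i : Fin d, (i : ℕ) = d - 1 ∧ μ i ≠ 0)
    (h : ∃ i, 2 ≤ μ i) :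
    NFmono d μ = NF d (rwPoly d μ (leastSq μ h)) := by
  rw [NFmono_sq h0 h, NF_eq_sum]
  exact Finset.sum_attach _ (fun τ => coeff τ (rwPoly d μ (leastSq μ h)) • NFmono d τ)

lemma monomial_single2 (i : Fin d) :
    (monomial (Finsupp.single i 2) 1 : MvPolynomial (Fin d) ℚ) = X i * X i := by
  rw [X_mul_X]
  congr 1
  rw [← Finsupp.single_add]

lemma NF_mul_expand (p q : MvPolynomial (Fin d) ℚ) :
    NF d (p * q) = ∑ τ ∈ p.support, p.coeff τ • NF d (monomial τ 1 * q) := by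
  conv_lhs => rw [p.as_sum, Finset.sum_mul]
  rw [map_sum]
  refine Finset.sum_congr rfl fun τ _ => ?_
  have : (monomial τ (coeff τ p) : MvPolynomial (Fin d) ℚ) * q
      = (coeff τ p) • (monomial τ 1 * q) := by
    rw [← smul_mul_assoc, smul_monomial, smul_eq_mul, mul_one]
  rw [this, map_smul]

lemma NF_mono_mul_eq_zero {μ : Fin d →₀ ℕ} {j : Fin d} (hj : (j : ℕ) = d - 1) (hμ : μ j ≠ 0)
    (q : MvPolynomial (Fin d) ℚ) : NF d (monomial μ 1 * q) = 0 := by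
  classical
  rw [NF_eq_sum]
  refine Finset.sum_eq_zero fun τ hτ => ?_
  have h1 := support_mul _ _ hτ
  rw [Finset.mem_add] at h1
  obtain ⟨ν, hν, σ, hσ, rfl⟩ := h1
  rw [support_monomial] at hν
  simp only [one_ne_zero, if_false, Finset.mem_singleton] at hν
  subst hν
  rw [NFmono_last ⟨j, hj, by
    rw [Finsupp.add_apply]
    exact fun hc => hμ (by omega)⟩, smul_zero]

lemma mono_mul_lagR_support {μ' : Fin d →₀ ℕ} {b : Fin d} :
    ∀ τ ∈ ((monomial μ' 1 : MvPolynomial (Fin d) ℚ) * lagR d b).support,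
      wdeg τ = wdeg (μ' + Finsupp.single b 2) ∧ Lm (μ' + Finsupp.single b 2) < Lm τ := by
  intro τ hτ
  classical
  have h1 := support_mul _ _ hτ
  rw [Finset.mem_add] at h1
  obtain ⟨ν, hν, σ, hσ, rfl⟩ := h1
  rw [support_monomial] at hν
  simp only [one_ne_zero, if_false, Finset.mem_singleton] at hν
  subst hν
  obtain ⟨hw, hl⟩ := lagR_support b σ hσ
  constructor
  · rw [wdeg_add, wdeg_add, hw, wdeg_single]
    ring
  · rw [Lm_add, Lm_add, Lm_single]
    omega

lemma X_sq_eq (i : Fin d) : (X i * X i : MvPolynomial (Fin d) ℚ)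
    = ((-1 : ℚ) ^ ((i : ℕ) + 1)) • lagG d i - ((-1 : ℚ) ^ ((i : ℕ) + 1)) • lagR d i := by
  have hsq : (-1 : ℚ) ^ ((i : ℕ) + 1) * (-1 : ℚ) ^ ((i : ℕ) + 1) = 1 := by
    rw [← pow_add]
    exact Even.neg_one_pow ⟨(i : ℕ) + 1, rfl⟩
  rw [lagG, smul_add, smul_smul, hsq, one_smul, add_sub_cancel_right]


lemma Km_shift {τ ρ : Fin d →₀ ℕ} (c : Fin d) (hw : wdeg τ = wdeg ρ) (hl : Lm ρ < Lm τ) :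
    Km (τ + Finsupp.single c 2) < Km (ρ + Finsupp.single c 2) := by
  refine Km_lt ?_ ?_
  · rw [wdeg_add, wdeg_add, hw]
  · rw [Lm_add, Lm_add]
    omega

lemma NF_mono_mul_lagG (N : ℕ) : ∀ (μ : Fin d →₀ ℕ) (i : Fin d), (i : ℕ) + 1 ≤ d - 1 →
    Km (μ + Finsupp.single i 2) ≤ N →
    NF d (monomial μ 1 * lagG d i) = 0 := by
  induction N using Nat.strong_induction_on with
  | _ N IH =>
  intro μ i hi hKm
  classical
  set ν := μ + Finsupp.single i 2 with hν
  have hεi : (-1 : ℚ) ^ ((i : ℕ) + 1) * (-1 : ℚ) ^ ((i : ℕ) + 1) = 1 := by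
    rw [← pow_add]
    exact Even.neg_one_pow ⟨(i : ℕ) + 1, rfl⟩
  have hsplit : (monomial μ 1 : MvPolynomial (Fin d) ℚ) * lagG d i
      = ((-1 : ℚ) ^ ((i : ℕ) + 1)) • monomial ν 1 + monomial μ 1 * lagR d i := by
    rw [lagG, mul_add]
    congr 1
    rw [mul_smul_comm]
    congr 1
    rw [← monomial_single2, monomial_mul, mul_one]
  rw [hsplit, map_add, map_smul, NF_monomial ν 1, one_smul]
  by_cases hlast : ∃ j : Fin d, (j : ℕ) = d - 1 ∧ μ j ≠ 0
  · obtain ⟨j, hj1, hj2⟩ := hlast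
    have hν0 : ν j ≠ 0 := by
      rw [hν, Finsupp.add_apply]
      exact fun hc => hj2 (by omega)
    rw [NFmono_last ⟨j, hj1, hν0⟩, smul_zero, zero_add]
    exact NF_mono_mul_eq_zero hj1 hj2 _
  · have hνi : 2 ≤ ν i := by
      rw [hν, Finsupp.add_apply, Finsupp.single_apply, if_pos rfl]
      omega
    have hsq : ∃ j, 2 ≤ ν j := ⟨i, hνi⟩
    have hnl : ¬∃ j : Fin d, (j : ℕ) = d - 1 ∧ ν j ≠ 0 := by
      rintro ⟨j, hj1, hj2⟩
      refine hlast ⟨j, hj1, fun h0 => hj2 ?_⟩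
      have hji : i ≠ j := by
        intro h
        rw [← h] at hj1
        omega
      rw [hν, Finsupp.add_apply, Finsupp.single_apply, if_neg hji, h0]
      rfl
    set a := leastSq ν hsq with haa
    have ha2ν : 2 ≤ ν a := leastSq_mem ν hsq
    have hale : a ≤ i := leastSq_le ν hsq hνi
    rw [NFmono_sq' hnl hsq, ← haa]
    by_cases hcase : a = i
    · -- diagonal case: the rewrite uses the same relation
      rw [hcase, rwPoly, map_smul]
      rw [show ν - Finsupp.single i 2 = μ from add_tsub_cancel_right _ _]
      rw [smul_smul]
      have hsc : (-1 : ℚ) ^ ((i : ℕ) + 1) * (-1 : ℚ) ^ ((i : ℕ) : ℕ) = -1 := by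
        rw [← pow_add]
        exact Odd.neg_one_pow ⟨(i : ℕ), by omega⟩
      rw [hsc, neg_one_smul, neg_add_cancel]
    · -- off-diagonal case: confluence
      have haiN : (a : ℕ) ≠ (i : ℕ) := fun h => hcase (Fin.ext h)
      have hμa : 2 ≤ μ a := by
        rw [hν, Finsupp.add_apply, Finsupp.single_apply, if_neg (fun h => hcase h.symm)] at ha2ν
        omega
      have haleN : (a : ℕ) ≤ (i : ℕ) := hale
      have haD : (a : ℕ) + 1 ≤ d - 1 := by omega
      set μh := μ - Finsupp.single a 2 with hμh
      have hμhadd : μh + Finsupp.single a 2 = μ :=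
        tsub_add_cancel_of_le (by rwa [Finsupp.single_le_iff])
      have hshift : ν - Finsupp.single a 2 = μh + Finsupp.single i 2 := by
        ext j
        simp only [hν, hμh, Finsupp.tsub_apply, Finsupp.add_apply, Finsupp.single_apply]
        split_ifs with h1 h2 h2
        · exact absurd (h2.trans h1.symm) hcase
        · omega
        · omega
        · omega
      have hνeq : ν = (μh + Finsupp.single a 2) + Finsupp.single i 2 := by rw [hμhadd]
      have sub1 : NF d (monomial μh 1 * (lagR d a * lagG d i)) = 0 := by
        rw [← mul_assoc, NF_mul_expand]
        refine Finset.sum_eq_zero fun τ hτ => ?_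
        obtain ⟨hw, hl⟩ := mono_mul_lagR_support τ hτ
        have hlt : Km (τ + Finsupp.single i 2) < N := by
          have h2 := Km_shift i hw hl
          rw [← hνeq] at h2
          omega
        rw [IH _ hlt τ i hi le_rfl, smul_zero]
      have sub2 : NF d (monomial μh 1 * (lagR d i * lagG d a)) = 0 := by
        rw [← mul_assoc, NF_mul_expand]
        refine Finset.sum_eq_zero fun τ hτ => ?_
        obtain ⟨hw, hl⟩ := mono_mul_lagR_support τ hτ
        have hlt : Km (τ + Finsupp.single a 2) < N := by
          have h2 := Km_shift a hw hl
          have he : (μh + Finsupp.single i 2) + Finsupp.single a 2 = ν := by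
            rw [hνeq, add_right_comm]
          rw [he] at h2
          omega
        rw [IH _ hlt τ a haD le_rfl, smul_zero]
      set Z := NF d (monomial μh 1 * (lagR d a * lagR d i)) with hZ
      have hW : NF d (monomial μh 1 * ((X i * X i) * lagR d a))
          = -(((-1 : ℚ) ^ ((i : ℕ) + 1)) • Z) := by
        have hexp : (X i * X i) * lagR d a
            = ((-1 : ℚ) ^ ((i : ℕ) + 1)) • (lagR d a * lagG d i)
              - ((-1 : ℚ) ^ ((i : ℕ) + 1)) • (lagR d a * lagR d i) := by
          rw [X_sq_eq i, sub_mul, smul_mul_assoc, smul_mul_assoc,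
            mul_comm (lagG d i), mul_comm (lagR d i)]
        rw [hexp, mul_sub, mul_smul_comm, mul_smul_comm, map_sub, map_smul, map_smul, sub1,
          smul_zero, zero_sub, ← hZ]
      have EA : NF d (rwPoly d ν a)
          = ((-1 : ℚ) ^ ((a : ℕ))) • (-(((-1 : ℚ) ^ ((i : ℕ) + 1)) • Z)) := by
        rw [rwPoly, map_smul, hshift]
        congr 1
        rw [show (monomial (μh + Finsupp.single i 2) 1 : MvPolynomial (Fin d) ℚ)
            = monomial μh 1 * monomial (Finsupp.single i 2) 1 by rw [monomial_mul, mul_one],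
          monomial_single2, mul_assoc]
        exact hW
      have EB : NF d (monomial μ 1 * lagR d i) = ((-1 : ℚ) ^ ((a : ℕ))) • Z := by
        have hm2 : (monomial μ 1 : MvPolynomial (Fin d) ℚ) = monomial μh 1 * (X a * X a) := by
          rw [← monomial_single2, monomial_mul, mul_one, hμhadd]
        have hexp2 : (X a * X a) * lagR d i
            = ((-1 : ℚ) ^ ((a : ℕ) + 1)) • (lagR d i * lagG d a)
              - ((-1 : ℚ) ^ ((a : ℕ) + 1)) • (lagR d i * lagR d a) := by
          rw [X_sq_eq a, sub_mul, smul_mul_assoc, smul_mul_assoc,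
            mul_comm (lagG d a), mul_comm (lagR d a)]
        rw [hm2, mul_assoc, hexp2, mul_sub, mul_smul_comm, mul_smul_comm, map_sub, map_smul,
          map_smul, sub2, smul_zero, zero_sub]
        rw [show (monomial μh 1 : MvPolynomial (Fin d) ℚ) * (lagR d i * lagR d a)
            = monomial μh 1 * (lagR d a * lagR d i) by rw [mul_comm (lagR d i)], ← hZ]
        rw [pow_succ, mul_neg_one, neg_smul, neg_neg]
      rw [EA, EB]
      simp only [smul_neg, smul_smul]
      rw [show (-1 : ℚ) ^ ((i : ℕ) + 1) * ((-1 : ℚ) ^ ((a : ℕ)) * (-1 : ℚ) ^ ((i : ℕ) + 1))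
          = (-1 : ℚ) ^ ((a : ℕ)) by rw [mul_comm ((-1 : ℚ) ^ ((a : ℕ))), ← mul_assoc, hεi,
            one_mul]]
      exact neg_add_cancel _


lemma lagG_mem (i : Fin d) (hi : (i : ℕ) + 1 ≤ d - 1) : lagG d i ∈ lagIdeal d := by
  have heq : lagG d i = MvPolynomial.weightedHomogeneousComponent (lagWeight d)
      (2 * ((i : ℕ) + 1)) (lagF d) := by
    rw [whc_lagF, lagB_even_split i hi, lagG, lagR]
    ring
  exact Ideal.subset_span (Or.inl ⟨2 * ((i : ℕ) + 1), by omega, heq⟩)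

lemma X_last_mem {j : Fin d} (hj : (j : ℕ) = d - 1) : (X j : MvPolynomial (Fin d) ℚ) ∈ lagIdeal d :=
  Ideal.subset_span (Or.inr ⟨j, hj, rfl⟩)

noncomputable def iota (d : ℕ) :
    ({S : Finset (Fin d) // ∀ i ∈ S, (i : ℕ) + 1 < d} →₀ ℚ) →ₗ[ℚ] MvPolynomial (Fin d) ℚ :=
  Finsupp.linearCombination ℚ (fun S => ∏ i ∈ S.1, X i)

lemma iota_single (S : {S : Finset (Fin d) // ∀ i ∈ S, (i : ℕ) + 1 < d}) :
    iota d (Finsupp.single S 1) = ∏ i ∈ S.1, X i := by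
  rw [iota, Finsupp.linearCombination_single, one_smul]

lemma prod_X_eq_monomial (S : Finset (Fin d)) :
    (∏ i ∈ S, X i : MvPolynomial (Fin d) ℚ)
      = monomial (∑ i ∈ S, Finsupp.single i 1) 1 := by
  classical
  induction S using Finset.induction_on with
  | empty => simp
  | insert _ _ hx ih =>
    rw [Finset.prod_insert hx, Finset.sum_insert hx, ih, X, monomial_mul, one_mul]

lemma indicator_apply (S : Finset (Fin d)) (j : Fin d) :
    (∑ i ∈ S, Finsupp.single i (1 : ℕ)) j = if j ∈ S then 1 else 0 := by
  classical
  rw [Finsupp.finset_sum_apply]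
  rw [Finset.sum_congr rfl fun i _ => Finsupp.single_apply]
  exact Finset.sum_ite_eq' S j (fun _ => 1)

lemma indicator_support (S : Finset (Fin d)) :
    (∑ i ∈ S, Finsupp.single i (1 : ℕ)).support = S := by
  classical
  ext j
  rw [Finsupp.mem_support_iff, indicator_apply]
  split_ifs with h <;> simp [h]

lemma eq_indicator_of_sqfree {μ : Fin d →₀ ℕ} (h : ∀ i, μ i ≤ 1) :
    μ = ∑ i ∈ μ.support, Finsupp.single i (1 : ℕ) := by
  classical
  ext j
  rw [indicator_apply]
  split_ifs with hj
  · have := Finsupp.mem_support_iff.mp hj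
    have := h j
    omega
  · exact Finsupp.notMem_support_iff.mp hj


lemma sub_iota_NF_mem_of (q : MvPolynomial (Fin d) ℚ)
    (h : ∀ τ ∈ q.support, monomial τ 1 - iota d (NFmono d τ) ∈ lagIdeal d) :
    q - iota d (NF d q) ∈ lagIdeal d := by
  classical
  have heq : q - iota d (NF d q)
      = ∑ τ ∈ q.support, (coeff τ q) • (monomial τ 1 - iota d (NFmono d τ)) := by
    nth_rewrite 1 [q.as_sum]
    rw [NF_eq_sum, map_sum, ← Finset.sum_sub_distrib]
    refine Finset.sum_congr rfl fun τ _ => ?_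
    rw [smul_sub, map_smul]
    congr 1
    rw [smul_monomial, smul_eq_mul, mul_one]
  rw [heq]
  refine Submodule.sum_mem _ fun τ hτ => ?_
  rw [← C_mul']
  exact Ideal.mul_mem_left _ _ (h τ hτ)

lemma span_NFmono : ∀ (N : ℕ) (μ : Fin d →₀ ℕ), Km μ ≤ N →
    monomial μ 1 - iota d (NFmono d μ) ∈ lagIdeal d := by
  intro N
  induction N using Nat.strong_induction_on with
  | _ N IH =>
  intro μ hKm
  classical
  by_cases hlast : ∃ j : Fin d, (j : ℕ) = d - 1 ∧ μ j ≠ 0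
  · rw [NFmono_last hlast, map_zero, sub_zero]
    obtain ⟨j, hj1, hj2⟩ := hlast
    have hfac : (monomial μ 1 : MvPolynomial (Fin d) ℚ)
        = monomial (μ - Finsupp.single j 1) 1 * X j := by
      rw [X, monomial_mul, mul_one,
        tsub_add_cancel_of_le (Finsupp.single_le_iff.mpr (by omega))]
    rw [hfac]
    exact Ideal.mul_mem_left _ _ (X_last_mem hj1)
  · by_cases hsq : ∃ i, 2 ≤ μ i
    · rw [NFmono_sq' hlast hsq]
      set a := leastSq μ hsq with ha
      have ha2 : 2 ≤ μ a := leastSq_mem μ hsq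
      have haD : (a : ℕ) + 1 ≤ d - 1 := by
        have h1 : (a : ℕ) ≠ d - 1 := fun hc => hlast ⟨a, hc, by omega⟩
        have := a.isLt
        omega
      have hε2 : ((-1 : ℚ) ^ ((a : ℕ) + 1)) * ((-1 : ℚ) ^ ((a : ℕ) + 1)) = 1 := by
        rw [← pow_add]
        exact Even.neg_one_pow ⟨(a : ℕ) + 1, rfl⟩
      have hm : monomial (μ - Finsupp.single a 2) (1 : ℚ) * (X a * X a) = monomial μ 1 := by
        rw [← monomial_single2, monomial_mul, mul_one,
          tsub_add_cancel_of_le (Finsupp.single_le_iff.mpr ha2)]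
      have hkey : (monomial μ 1 : MvPolynomial (Fin d) ℚ)
          = ((-1 : ℚ) ^ ((a : ℕ) + 1)) • (monomial (μ - Finsupp.single a 2) 1 * lagG d a)
            + rwPoly d μ a := by
        rw [lagG, rwPoly, mul_add, smul_add, mul_smul_comm, smul_smul, hε2, one_smul, hm]
        rw [show ((-1 : ℚ) ^ ((a : ℕ) + 1)) = -((-1 : ℚ) ^ ((a : ℕ))) from by
          rw [pow_succ, mul_neg_one], neg_smul]
        abel
      have hmem1 : ((-1 : ℚ) ^ ((a : ℕ) + 1)) •
          (monomial (μ - Finsupp.single a 2) 1 * lagG d a) ∈ lagIdeal d := by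
        rw [← C_mul']
        exact Ideal.mul_mem_left _ _ (Ideal.mul_mem_left _ _ (lagG_mem a haD))
      have hmem2 : rwPoly d μ a - iota d (NF d (rwPoly d μ a)) ∈ lagIdeal d := by
        refine sub_iota_NF_mem_of _ fun τ hτ => ?_
        obtain ⟨hw, hl⟩ := rwPoly_support ha2 τ hτ
        exact IH _ (lt_of_lt_of_le (Km_lt hw hl) hKm) τ le_rfl
      have hre : monomial μ 1 - iota d (NF d (rwPoly d μ a)) =
          ((-1 : ℚ) ^ ((a : ℕ) + 1)) • (monomial (μ - Finsupp.single a 2) 1 * lagG d a)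
            + (rwPoly d μ a - iota d (NF d (rwPoly d μ a))) := by
        conv_lhs => rw [hkey]
        abel
      rw [hre]
      exact Submodule.add_mem _ hmem1 hmem2
    · have h1 : ∀ i, μ i ≤ 1 := fun i => by
        by_contra hc
        exact hsq ⟨i, by omega⟩
      rw [NFmono_sqfree hlast hsq (fun i hi => by
        have h2 := Finsupp.mem_support_iff.mp hi
        have h3 : ¬((i : ℕ) = d - 1 ∧ μ i ≠ 0) := fun hc => hlast ⟨i, hc⟩
        have := i.isLt
        omega)]
      rw [iota_single, prod_X_eq_monomial, ← eq_indicator_of_sqfree h1, sub_self]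
      exact (lagIdeal d).zero_mem

lemma sub_iota_NF_mem (q : MvPolynomial (Fin d) ℚ) :
    q - iota d (NF d q) ∈ lagIdeal d :=
  sub_iota_NF_mem_of q fun τ _ => span_NFmono (Km τ) τ le_rfl


lemma NF_zero_of_mem {x : MvPolynomial (Fin d) ℚ} (hx : x ∈ lagIdeal d) :
    ∀ r : MvPolynomial (Fin d) ℚ, NF d (r * x) = 0 := by
  induction hx using Submodule.span_induction with
  | mem y hy =>
    rcases hy with ⟨n, hn1, rfl⟩ | ⟨j, hj, rfl⟩
    · intro r
      rcases whc_classify (d := d) n with h0 | ⟨i, hiD, hin, heq⟩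
      · rw [h0, mul_zero, map_zero]
      · rw [heq, NF_mul_expand]
        refine Finset.sum_eq_zero fun τ _ => ?_
        rw [NF_mono_mul_lagG (Km (τ + Finsupp.single i 2)) τ i hiD le_rfl, smul_zero]
    · intro r
      rw [NF_mul_expand]
      refine Finset.sum_eq_zero fun τ _ => ?_
      rw [X, monomial_mul, mul_one, NF_monomial]
      rw [NFmono_last ⟨j, hj, by
        rw [Finsupp.add_apply, Finsupp.single_apply, if_pos rfl]
        omega⟩]
      rw [smul_zero, smul_zero]
  | zero => intro r; rw [mul_zero, map_zero]
  | add y z hy hz ihy ihz => intro r; rw [mul_add, map_add, ihy r, ihz r, add_zero]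
  | smul a y hy ihy =>
    intro r
    rw [smul_eq_mul, ← mul_assoc]
    exact ihy (r * a)

lemma NF_zero_of_mem' {x : MvPolynomial (Fin d) ℚ} (hx : x ∈ lagIdeal d) : NF d x = 0 := by
  have := NF_zero_of_mem hx 1
  rwa [one_mul] at this


lemma NF_prod_X (S : {S : Finset (Fin d) // ∀ i ∈ S, (i : ℕ) + 1 < d}) :
    NF d (∏ i ∈ S.1, X i) = Finsupp.single S 1 := by
  classical
  rw [prod_X_eq_monomial, NF_monomial, one_smul]
  have h1 : ∀ i, (∑ i ∈ S.1, Finsupp.single i (1 : ℕ)) i ≤ 1 := by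
    intro i
    rw [indicator_apply]
    split_ifs <;> omega
  have hlast : ¬∃ j : Fin d, (j : ℕ) = d - 1 ∧ (∑ i ∈ S.1, Finsupp.single i (1 : ℕ)) j ≠ 0 := by
    rintro ⟨j, hj1, hj2⟩
    rw [indicator_apply] at hj2
    by_cases hjS : j ∈ S.1
    · have := S.2 j hjS
      omega
    · rw [if_neg hjS] at hj2
      exact hj2 rfl
  have hsq : ¬∃ i, 2 ≤ (∑ i ∈ S.1, Finsupp.single i (1 : ℕ)) i := by
    rintro ⟨i, hi⟩
    have := h1 i
    omega
  rw [NFmono_sqfree hlast hsq (fun i hi => by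
    rw [Finsupp.mem_support_iff, indicator_apply] at hi
    by_cases hjS : i ∈ S.1
    · exact S.2 i hjS
    · rw [if_neg hjS] at hi
      exact absurd rfl hi)]
  congr 1
  exact Subtype.ext (indicator_support S.1)

end LagAux

open LagAux in
/-- The monomials `u_{j_1} ⋯ u_{j_m}` with `1 ≤ j_1 < ⋯ < j_m < d` (including the
empty product `1`) form a `ℚ`-vector space basis of `R_d`. -/
theorem lag_basis (d : ℕ) :
    ∃ b : Module.Basis {S : Finset (Fin d) // ∀ i ∈ S, (i : ℕ) + 1 < d} ℚ
        (MvPolynomial (Fin d) ℚ ⧸ lagIdeal d),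
      ∀ S, b S = Ideal.Quotient.mk (lagIdeal d) (∏ i ∈ S.1, MvPolynomial.X i) := by
  classical
  set e : ({S : Finset (Fin d) // ∀ i ∈ S, (i : ℕ) + 1 < d} →₀ ℚ) →ₗ[ℚ]
      (MvPolynomial (Fin d) ℚ ⧸ lagIdeal d) :=
    (Ideal.Quotient.mkₐ ℚ (lagIdeal d)).toLinearMap.comp (LagAux.iota d) with he
  set J' : Submodule ℚ (MvPolynomial (Fin d) ℚ) := (lagIdeal d).restrictScalars ℚ with hJ'
  have hker : J' ≤ LinearMap.ker (LagAux.NF d) := fun x hx =>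
    LinearMap.mem_ker.mpr (LagAux.NF_zero_of_mem' hx)
  set ψ : (MvPolynomial (Fin d) ℚ ⧸ lagIdeal d) →ₗ[ℚ]
      ({S : Finset (Fin d) // ∀ i ∈ S, (i : ℕ) + 1 < d} →₀ ℚ) :=
    (Submodule.liftQ J' (LagAux.NF d) hker).comp
      ((Submodule.Quotient.restrictScalarsEquiv ℚ (lagIdeal d)).symm.toLinearMap) with hψ
  have heψ : ∀ p : MvPolynomial (Fin d) ℚ,
      ψ (Ideal.Quotient.mk (lagIdeal d) p) = LagAux.NF d p := by
    intro p
    rw [hψ]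
    simp only [LinearMap.comp_apply, LinearEquiv.coe_toLinearMap]
    rw [show Ideal.Quotient.mk (lagIdeal d) p = Submodule.Quotient.mk p from rfl]
    rw [Submodule.Quotient.restrictScalarsEquiv_symm_mk]
    exact Submodule.liftQ_apply _ _ _
  have h1 : e.comp ψ = LinearMap.id := by
    apply LinearMap.ext
    intro x
    obtain ⟨p, rfl⟩ := Ideal.Quotient.mk_surjective x
    simp only [LinearMap.comp_apply, LinearMap.id_apply]
    rw [heψ, he]
    simp only [LinearMap.comp_apply, AlgHom.toLinearMap_apply, Ideal.Quotient.mkₐ_eq_mk]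
    refine Ideal.Quotient.eq.mpr ?_
    have hmem := LagAux.sub_iota_NF_mem (d := d) p
    have := (lagIdeal d).neg_mem hmem
    rwa [neg_sub] at this
  have h2 : ψ.comp e = LinearMap.id := by
    refine Finsupp.lhom_ext fun S c => ?_
    simp only [LinearMap.comp_apply, LinearMap.id_apply]
    rw [he]
    simp only [LinearMap.comp_apply, AlgHom.toLinearMap_apply, Ideal.Quotient.mkₐ_eq_mk]
    rw [heψ]
    have hsc : Finsupp.single S c = c • Finsupp.single S (1 : ℚ) := by
      rw [Finsupp.smul_single, smul_eq_mul, mul_one]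
    rw [hsc, map_smul, map_smul, LagAux.iota_single, LagAux.NF_prod_X]
  set equivTQ := LinearEquiv.ofLinear e ψ h1 h2 with heq
  refine ⟨(Finsupp.basisSingleOne).map equivTQ, fun S => ?_⟩
  rw [Module.Basis.map_apply]
  have hb : (Finsupp.basisSingleOne :
      Module.Basis {S : Finset (Fin d) // ∀ i ∈ S, (i : ℕ) + 1 < d} ℚ _) S = Finsupp.single S 1 := by
    rw [Finsupp.coe_basisSingleOne]
  rw [hb, heq, LinearEquiv.ofLinear_apply, he]
  simp only [LinearMap.comp_apply, AlgHom.toLinearMap_apply, Ideal.Quotient.mkₐ_eq_mk]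
  rw [LagAux.iota_single]
end
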